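/- In the subset-construction DFA obtained from the reverse of 𝒰ₙ(a,b,c) (n ≥ 3), for any two distinct subsets S, T ⊆ {0,…,n−1} there exists a word w over {a,b,c} taking the pair (S, T) to the pair (full set, empty set) or (empty set, full set). Specifically, if j ∈ S \ T, then the word aʲ·(c·a^{n−1})^{n−2}·c maps S to {0,…,n−1} and T to ∅. -/

import Mathlib

namespace SCPaper

/-- Reversal of a language. -/
def rev {α : Type} (L : Language α) : Language α := {w | w.reverse ∈ L}

/-- Union of two languages. -/
def lunion {α : Type} (K L : Language α) : Language α := {w | w ∈ K ∨ w ∈ L}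

/-- Intersection of two languages. -/
def linter {α : Type} (K L : Language α) : Language α := {w | w ∈ K ∧ w ∈ L}

/-- Difference of two languages. -/
def ldiff {α : Type} (K L : Language α) : Language α := {w | w ∈ K ∧ w ∉ L}

/-- Symmetric difference of two languages. -/
def lsymm {α : Type} (K L : Language α) : Language α := lunion (ldiff K L) (ldiff L K)

/-- Sizes (numbers of states) of complete DFAs recognizing `L`. -/
def complexitySet {α : Type} (L : Language α) : Set ℕ :=
  {n | ∃ M : DFA α (Fin n), M.accepts = L}

/-- A language is regular if it is recognized by some finite DFA. -/
def Regular {α : Type} (L : Language α) : Prop := (complexitySet L).Nonempty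

/-- State complexity: the number of states of a minimal DFA for `L`. -/
noncomputable def sc {α : Type} (L : Language α) : ℕ := sInf (complexitySet L)

/-- The cyclic permutation (0,1,…,n−1). -/
def cyc (n : ℕ) (i : Fin n) : Fin n :=
  ⟨(i.val + 1) % n, Nat.mod_lt _ (Nat.lt_of_le_of_lt (Nat.zero_le _) i.isLt)⟩

/-- The transposition (0,1). -/
def tp01 (n : ℕ) (i : Fin n) : Fin n :=
  if i.val = 0 then ⟨1 % n, Nat.mod_lt _ (Nat.lt_of_le_of_lt (Nat.zero_le _) i.isLt)⟩
  else if i.val = 1 then ⟨0, Nat.lt_of_le_of_lt (Nat.zero_le _) i.isLt⟩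
  else i

/-- The singular map sending n−1 to 0 and fixing everything else. -/
def sing (n : ℕ) (i : Fin n) : Fin n :=
  if i.val = n - 1 then ⟨0, Nat.lt_of_le_of_lt (Nat.zero_le _) i.isLt⟩ else i

/-- The transposition (n−2, n−1). -/
def tpTop (n : ℕ) (i : Fin n) : Fin n :=
  if i.val = n - 1 then ⟨n - 2, by have := i.isLt; omega⟩
  else if i.val = n - 2 then ⟨n - 1, by have := i.isLt; omega⟩
  else i

/-- The singular map sending n−1 to n−2 and fixing everything else. -/
def singTop (n : ℕ) (i : Fin n) : Fin n :=
  if i.val = n - 1 then ⟨n - 2, by have := i.isLt; omega⟩ else i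

/-- 𝒰ₙ(a,b,∅): binary alphabet, a = cycle (0,…,n−1), b = transposition (0,1),
initial state 0, final state n−1. -/
def U2dfa (n : ℕ) (h : 0 < n) : DFA (Fin 2) (Fin n) where
  step := fun i x => if x = 0 then cyc n i else tp01 n i
  start := ⟨0, h⟩
  accept := {i | i.val = n - 1}

def U2 (n : ℕ) (h : 0 < n) : Language (Fin 2) := (U2dfa n h).accepts

/-- 𝒰ₙ(a,b,c): a = cycle, b = transposition (0,1), c = (n−1 ↦ 0). -/
def Udfa (n : ℕ) (h : 0 < n) : DFA (Fin 3) (Fin n) where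
  step := fun i x => if x = 0 then cyc n i else if x = 1 then tp01 n i else sing n i
  start := ⟨0, h⟩
  accept := {i | i.val = n - 1}

def U (n : ℕ) (h : 0 < n) : Language (Fin 3) := (Udfa n h).accepts

/-- 𝒰ₙ(a,b,c) with final state set {0}. -/
def U0dfa (n : ℕ) (h : 0 < n) : DFA (Fin 3) (Fin n) where
  step := fun i x => if x = 0 then cyc n i else if x = 1 then tp01 n i else sing n i
  start := ⟨0, h⟩
  accept := {i | i.val = 0}

def U0 (n : ℕ) (h : 0 < n) : Language (Fin 3) := (U0dfa n h).accepts

/-- 𝒰ₙ(a,b,c,d): a = cycle, b = transposition (0,1), c = (n−1 ↦ 0), d = identity. -/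
def U4dfa (n : ℕ) (h : 0 < n) : DFA (Fin 4) (Fin n) where
  step := fun i x =>
    if x = 0 then cyc n i else if x = 1 then tp01 n i else if x = 2 then sing n i else i
  start := ⟨0, h⟩
  accept := {i | i.val = n - 1}

def U4 (n : ℕ) (h : 0 < n) : Language (Fin 4) := (U4dfa n h).accepts

/-- 𝒰ₙ(d,c,b,a): d = cycle, c = transposition (0,1), b = (n−1 ↦ 0), a = identity. -/
def U4dcbaDfa (n : ℕ) (h : 0 < n) : DFA (Fin 4) (Fin n) where
  step := fun i x =>
    if x = 3 then cyc n i else if x = 2 then tp01 n i else if x = 1 then sing n i else i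
  start := ⟨0, h⟩
  accept := {i | i.val = n - 1}

def U4dcba (n : ℕ) (h : 0 < n) : Language (Fin 4) := (U4dcbaDfa n h).accepts

/-- 𝒱ₙ(a,b,c,d): a = cycle, b = transposition (n−2,n−1), c = (n−1 ↦ n−2), d = identity. -/
def Vdfa (n : ℕ) (h : 0 < n) : DFA (Fin 4) (Fin n) where
  step := fun i x =>
    if x = 0 then cyc n i else if x = 1 then tpTop n i else if x = 2 then singTop n i else i
  start := ⟨0, h⟩
  accept := {i | i.val = n - 1}

def V (n : ℕ) (h : 0 < n) : Language (Fin 4) := (Vdfa n h).accepts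

/-- 𝒱ₙ(d,c,b,a): d = cycle, c = transposition (n−2,n−1), b = (n−1 ↦ n−2), a = identity. -/
def VdcbaDfa (n : ℕ) (h : 0 < n) : DFA (Fin 4) (Fin n) where
  step := fun i x =>
    if x = 3 then cyc n i else if x = 2 then tpTop n i else if x = 1 then singTop n i else i
  start := ⟨0, h⟩
  accept := {i | i.val = n - 1}

def Vdcba (n : ℕ) (h : 0 < n) : Language (Fin 4) := (VdcbaDfa n h).accepts

/-- Direct product of two DFAs with a chosen set of final states. -/
def prodDFA {α σ₁ σ₂ : Type} (M : DFA α σ₁) (N : DFA α σ₂) (acc : Set (σ₁ × σ₂)) :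
    DFA α (σ₁ × σ₂) where
  step := fun p x => (M.step p.1 x, N.step p.2 x)
  start := (M.start, N.start)
  accept := acc


/-- Chinese-remainder style pairing k ↦ (k mod m, k mod n). -/
def toPair (m n : ℕ) (hm : 0 < m) (hn : 0 < n) (k : Fin (m * n)) : Fin m × Fin n :=
  (⟨k.val % m, Nat.mod_lt _ hm⟩, ⟨k.val % n, Nat.mod_lt _ hn⟩)

/-- Componentwise successor on the product of two cyclic automata. -/
def prodSucc (m n : ℕ) (p : Fin m × Fin n) : Fin m × Fin n := (cyc m p.1, cyc n p.2)

/-- One-letter subset transition of the reversed NFA of 𝒰ₙ(a,b,c). -/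
def rstep (n : ℕ) (h : 0 < n) (S : Set (Fin n)) (x : Fin 3) : Set (Fin n) :=
  {q | (Udfa n h).step q x ∈ S}

/-- Action of a word on subsets in the reversed NFA of 𝒰ₙ(a,b,c). -/
def rword (n : ℕ) (h : 0 < n) (S : Set (Fin n)) (w : List (Fin 3)) : Set (Fin n) :=
  w.foldl (rstep n h) S

end SCPaper

open SCPaper

namespace SCAux

variable {n : ℕ}

lemma pos3 (hn : 3 ≤ n) : 0 < n := by omega

lemma rword_append (h : 0 < n) (S : Set (Fin n)) (u v : List (Fin 3)) :
    rword n h S (u ++ v) = rword n h (rword n h S u) v :=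
  List.foldl_append ..

lemma rword_cons (h : 0 < n) (S : Set (Fin n)) (x : Fin 3) (w : List (Fin 3)) :
    rword n h S (x :: w) = rword n h (rstep n h S x) w := rfl

lemma rstep_a (h : 0 < n) (S : Set (Fin n)) :
    rstep n h S 0 = {q | cyc n q ∈ S} := by
  ext q; simp [rstep, Udfa]

lemma rstep_c (h : 0 < n) (S : Set (Fin n)) :
    rstep n h S 2 = {q | sing n q ∈ S} := by
  ext q; simp [rstep, Udfa]

lemma mem_rword_rep0 (h : 0 < n) (m : ℕ) : ∀ (S : Set (Fin n)) (q : Fin n),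
    (q ∈ rword n h S (List.replicate m 0) ↔ (⟨(q.val + m) % n, Nat.mod_lt _ h⟩ : Fin n) ∈ S) := by
  induction m with
  | zero =>
    intro S q
    simp only [List.replicate_zero, rword, List.foldl_nil]
    have : (⟨(q.val + 0) % n, Nat.mod_lt _ h⟩ : Fin n) = q := by
      apply Fin.ext; simp [Nat.mod_eq_of_lt q.isLt]
    rw [this]
  | succ m ih =>
    intro S q
    rw [List.replicate_succ, rword_cons, ih, rstep_a]
    have : cyc n (⟨(q.val + m) % n, Nat.mod_lt _ h⟩ : Fin n)
        = (⟨(q.val + (m + 1)) % n, Nat.mod_lt _ h⟩ : Fin n) := by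
      apply Fin.ext
      simp [cyc, Nat.mod_add_mod, ← Nat.add_assoc]
    simp only [Set.mem_setOf_eq, this]

lemma sing_val_le (hn : 3 ≤ n) (q : Fin n) : (sing n q).val ≤ n - 2 := by
  unfold sing
  split
  · simp
  · have := q.isLt; omega

lemma mem_rword_block (hn : 3 ≤ n) (X : Set (Fin n)) (i : Fin n) :
    (i ∈ rword n (pos3 hn) X ((2 : Fin 3) :: List.replicate (n - 1) 0) ↔
      (if i.val = 0 then (⟨0, pos3 hn⟩ : Fin n) else ⟨i.val - 1, by omega⟩) ∈ X) := by
  rw [rword_cons, mem_rword_rep0, rstep_c]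
  have h : 0 < n := by omega
  have key : sing n (⟨(i.val + (n - 1)) % n, Nat.mod_lt _ h⟩ : Fin n)
      = (if i.val = 0 then (⟨0, pos3 hn⟩ : Fin n) else ⟨i.val - 1, by omega⟩) := by
    by_cases hi : i.val = 0
    · rw [if_pos hi]
      have harg : (i.val + (n - 1)) % n = n - 1 := by
        rw [hi, Nat.zero_add, Nat.mod_eq_of_lt (by omega)]
      apply Fin.ext
      simp [sing, harg]
    · rw [if_neg hi]
      have hlt : i.val < n := i.isLt
      have hv : (i.val + (n - 1)) % n = i.val - 1 := by
        have h1 : i.val + (n - 1) = (i.val - 1) + n := by omega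
        rw [h1, Nat.add_mod_right, Nat.mod_eq_of_lt (by omega)]
      have hne : i.val - 1 ≠ n - 1 := by omega
      apply Fin.ext
      simp [sing, hv, hne]
  simp only [Set.mem_setOf_eq, key]

lemma invS (hn : 3 ≤ n) (k : ℕ) : ∀ (X : Set (Fin n)), (⟨0, pos3 hn⟩ : Fin n) ∈ X →
    ∀ i : Fin n, i.val ≤ k →
      i ∈ rword n (pos3 hn) X
        (List.replicate k ((2 : Fin 3) :: List.replicate (n - 1) (0 : Fin 3))).flatten := by
  induction k with
  | zero =>
    intro X hX i hi
    have : i = (⟨0, pos3 hn⟩ : Fin n) := by apply Fin.ext; simp; omega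
    simpa [rword, this] using hX
  | succ k ih =>
    intro X hX i hi
    rw [List.replicate_succ', List.flatten_append, rword_append]
    have := mem_rword_block hn
      (rword n (pos3 hn) X
        (List.replicate k ((2 : Fin 3) :: List.replicate (n - 1) (0 : Fin 3))).flatten) i
    simp only [List.flatten_cons, List.flatten_nil, List.append_nil] at *
    rw [this]
    by_cases hi0 : i.val = 0
    · rw [if_pos hi0]; exact ih X hX _ (by simp)
    · rw [if_neg hi0]; exact ih X hX _ (by simp; omega)

lemma invT (hn : 3 ≤ n) (k : ℕ) : ∀ (X : Set (Fin n)), (⟨0, pos3 hn⟩ : Fin n) ∉ X →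
    ∀ i : Fin n, i.val ≤ k →
      i ∉ rword n (pos3 hn) X
        (List.replicate k ((2 : Fin 3) :: List.replicate (n - 1) (0 : Fin 3))).flatten := by
  induction k with
  | zero =>
    intro X hX i hi
    have : i = (⟨0, pos3 hn⟩ : Fin n) := by apply Fin.ext; simp; omega
    simpa [rword, this] using hX
  | succ k ih =>
    intro X hX i hi
    rw [List.replicate_succ', List.flatten_append, rword_append]
    have := mem_rword_block hn
      (rword n (pos3 hn) X
        (List.replicate k ((2 : Fin 3) :: List.replicate (n - 1) (0 : Fin 3))).flatten) i
    simp only [List.flatten_cons, List.flatten_nil, List.append_nil] at *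
    rw [this]
    by_cases hi0 : i.val = 0
    · rw [if_pos hi0]; exact ih X hX _ (by simp)
    · rw [if_neg hi0]; exact ih X hX _ (by simp; omega)

end SCAux

open SCAux

lemma part2_aux {n : ℕ} (hn : 3 ≤ n) (S T : Set (Fin n)) (j : Fin n) (hS : j ∈ S) (hT : j ∉ T) :
      rword n (pos3 hn) S
        (List.replicate j.val (0 : Fin 3) ++
          (List.replicate (n - 2) ((2 : Fin 3) :: List.replicate (n - 1) (0 : Fin 3))).flatten ++ [(2 : Fin 3)]) = Set.univ ∧
      rword n (pos3 hn) T
        (List.replicate j.val (0 : Fin 3) ++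
          (List.replicate (n - 2) ((2 : Fin 3) :: List.replicate (n - 1) (0 : Fin 3))).flatten ++ [(2 : Fin 3)]) = ∅ := by
  have h : 0 < n := by omega
  have hA : (⟨0, pos3 hn⟩ : Fin n) ∈ rword n (pos3 hn) S (List.replicate j.val 0) := by
    rw [mem_rword_rep0]
    convert hS using 2
    simp [Nat.mod_eq_of_lt j.isLt]
  have hB : (⟨0, pos3 hn⟩ : Fin n) ∉ rword n (pos3 hn) T (List.replicate j.val 0) := by
    rw [mem_rword_rep0]
    intro hmem
    apply hT
    convert hmem using 2
    simp [Nat.mod_eq_of_lt j.isLt]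
  have hYS := invS hn (n - 2) _ hA
  have hYT := invT hn (n - 2) _ hB
  rw [rword_append, rword_append, rword_append, rword_append]
  constructor
  · ext q
    simp only [rword, List.foldl_cons, List.foldl_nil, rstep_c, Set.mem_setOf_eq,
      Set.mem_univ, iff_true]
    exact hYS _ (sing_val_le hn _)
  · ext q
    simp only [rword, List.foldl_cons, List.foldl_nil, rstep_c, Set.mem_setOf_eq,
      Set.mem_empty_iff_false, iff_false]
    exact hYT _ (sing_val_le hn _)

open SCPaper

theorem reversed_subsets_to_full_and_empty (n : ℕ) (hn : 3 ≤ n) :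
    (∀ S T : Set (Fin n), S ≠ T → ∃ w : List (Fin 3),
      (rword n (by omega) S w = Set.univ ∧ rword n (by omega) T w = ∅) ∨
      (rword n (by omega) S w = ∅ ∧ rword n (by omega) T w = Set.univ)) ∧
    (∀ S T : Set (Fin n), ∀ j : Fin n, j ∈ S → j ∉ T →
      rword n (by omega) S
        (List.replicate j.val (0 : Fin 3) ++
          (List.replicate (n - 2) ((2 : Fin 3) :: List.replicate (n - 1) (0 : Fin 3))).flatten ++ [(2 : Fin 3)]) = Set.univ ∧
      rword n (by omega) T
        (List.replicate j.val (0 : Fin 3) ++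
          (List.replicate (n - 2) ((2 : Fin 3) :: List.replicate (n - 1) (0 : Fin 3))).flatten ++ [(2 : Fin 3)]) = ∅) := by
  constructor
  · intro S T hne
    have hj : ∃ j, (j ∈ S ∧ j ∉ T) ∨ (j ∈ T ∧ j ∉ S) := by
      by_contra hc
      push_neg at hc
      apply hne
      ext x
      have := hc x
      tauto
    obtain ⟨j, hj⟩ := hj
    rcases hj with ⟨h1, h2⟩ | ⟨h1, h2⟩
    · exact ⟨_, Or.inl (part2_aux hn S T j h1 h2)⟩
    · exact ⟨_, Or.inr ⟨(part2_aux hn T S j h1 h2).2, (part2_aux hn T S j h1 h2).1⟩⟩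
  · intro S T j h1 h2
    exact part2_aux hn S T j h1 h2
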